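/- The shuffle of two regular languages is regular. -/

import Mathlib

/-- `Shuffle u v w` means `w` is an interleaving of `u` and `v`, i.e. `w ∈ u || v`. -/
inductive Shuffle {α : Type*} : List α → List α → List α → Prop
  | nil : Shuffle [] [] []
  | left {u v w : List α} (a : α) : Shuffle u v w → Shuffle (a :: u) v (a :: w)
  | right {u v w : List α} (b : α) : Shuffle u v w → Shuffle u (b :: v) (b :: w)

/-- The shuffle of two languages: `L₁ || L₂ = ⋃_{u ∈ L₁, v ∈ L₂} u || v`. -/
def shuffleLang {α : Type} (L₁ L₂ : Language α) : Language α :=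
  {w | ∃ u ∈ L₁, ∃ v ∈ L₂, Shuffle u v w}

namespace ShuffleProof

variable {α : Type} {σ₁ σ₂ : Type}

/-- NFA for the shuffle: run both DFAs in parallel, each letter feeds one of them. -/
def shuffleNFA (M₁ : DFA α σ₁) (M₂ : DFA α σ₂) : NFA α (σ₁ × σ₂) where
  step := fun p a => {(M₁.step p.1 a, p.2), (p.1, M₂.step p.2 a)}
  start := {(M₁.start, M₂.start)}
  accept := {p | p.1 ∈ M₁.accept ∧ p.2 ∈ M₂.accept}

lemma stepSet_union (M : NFA α σ₁) (S T : Set σ₁) (a : α) :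
    M.stepSet (S ∪ T) a = M.stepSet S a ∪ M.stepSet T a := by
  ext q; simp [NFA.mem_stepSet, or_and_right, exists_or]

lemma evalFrom_union (M : NFA α σ₁) (S T : Set σ₁) (w : List α) :
    M.evalFrom (S ∪ T) w = M.evalFrom S w ∪ M.evalFrom T w := by
  induction w generalizing S T with
  | nil => rfl
  | cons a w ih => simp [NFA.evalFrom, NFA.evalFrom] at *; exact ih _ _

lemma mem_evalFrom_shuffle (M₁ : DFA α σ₁) (M₂ : DFA α σ₂) (w : List α) :
    ∀ (s : σ₁) (t : σ₂) (q : σ₁ × σ₂),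
      q ∈ (shuffleNFA M₁ M₂).evalFrom {(s, t)} w ↔
      ∃ u v, Shuffle u v w ∧ q = (M₁.evalFrom s u, M₂.evalFrom t v) := by
  induction w with
  | nil =>
    intro s t q
    simp only [NFA.evalFrom_nil, Set.mem_singleton_iff]
    constructor
    · rintro rfl; exact ⟨[], [], Shuffle.nil, rfl⟩
    · rintro ⟨u, v, hsh, rfl⟩; cases hsh; rfl
  | cons a w ih =>
    intro s t q
    have hst : (shuffleNFA M₁ M₂).stepSet {(s, t)} a =
        {(M₁.step s a, t)} ∪ {(s, M₂.step t a)} := by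
      ext p; simp [NFA.mem_stepSet, shuffleNFA, or_comm]
    constructor
    · intro hq
      rw [show (a :: w) = [a] ++ w from rfl] at hq
      rw [NFA.evalFrom, List.foldl_append] at hq
      simp only [List.foldl_cons, List.foldl_nil] at hq
      rw [hst, ← NFA.evalFrom, evalFrom_union] at hq
      rcases hq with hq | hq
      · obtain ⟨u, v, hsh, rfl⟩ := (ih _ _ _).mp hq
        exact ⟨a :: u, v, Shuffle.left a hsh, rfl⟩
      · obtain ⟨u, v, hsh, rfl⟩ := (ih _ _ _).mp hq
        exact ⟨u, a :: v, Shuffle.right a hsh, rfl⟩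
    · rintro ⟨u, v, hsh, rfl⟩
      rw [show (a :: w) = [a] ++ w from rfl, NFA.evalFrom, List.foldl_append]
      simp only [List.foldl_cons, List.foldl_nil]
      rw [hst, ← NFA.evalFrom, evalFrom_union]
      cases hsh with
      | left _ h =>
        exact Or.inl ((ih _ _ _).mpr ⟨_, _, h, rfl⟩)
      | right _ h =>
        exact Or.inr ((ih _ _ _).mpr ⟨_, _, h, rfl⟩)

lemma shuffleNFA_accepts (M₁ : DFA α σ₁) (M₂ : DFA α σ₂) :
    (shuffleNFA M₁ M₂).accepts = shuffleLang M₁.accepts M₂.accepts := by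
  ext w
  rw [NFA.mem_accepts]
  constructor
  · rintro ⟨q, hq, hmem⟩
    obtain ⟨u, v, hsh, rfl⟩ := (mem_evalFrom_shuffle M₁ M₂ w _ _ _).mp hmem
    exact ⟨u, hq.1, v, hq.2, hsh⟩
  · rintro ⟨u, hu, v, hv, hsh⟩
    exact ⟨(M₁.evalFrom M₁.start u, M₂.evalFrom M₂.start v), ⟨hu, hv⟩,
      (mem_evalFrom_shuffle M₁ M₂ w _ _ _).mpr ⟨u, v, hsh, rfl⟩⟩

end ShuffleProof

/-- The shuffle of two regular languages is regular. -/
theorem shuffleLang_isRegular {α : Type} (L₁ L₂ : Language α)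
    (h₁ : L₁.IsRegular) (h₂ : L₂.IsRegular) : (shuffleLang L₁ L₂).IsRegular := by
  obtain ⟨σ₁, _, M₁, rfl⟩ := h₁
  obtain ⟨σ₂, _, M₂, rfl⟩ := h₂
  classical
  exact ⟨Set (σ₁ × σ₂), inferInstance, (ShuffleProof.shuffleNFA M₁ M₂).toDFA,
    by rw [NFA.toDFA_correct, ShuffleProof.shuffleNFA_accepts]⟩
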